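/- Let E be a real normed vector space, N a smooth (1,1) tensor field on E with vanishing Nijenhuis torsion T(N) = 0, and a₀, …, a_{k-1} : E → ℝ smooth functions (k ≥ 1). Define the (1,1) tensor field M_k = N^k − Σ_{i=0}^{k-1} a_{k-1-i}·N^i (pointwise powers, sums and scalar multiples). Then the Nijenhuis torsion of M_k has the form (*): there exist a nonnegative integer m and smooth 1-forms φ₀, …, φ_m : E → L(E,ℝ) such that T(M_k)(X,Y)(x) = Σ_{i=0}^{m} ( φ_i(x)(Y(x))·N(x)^i(X(x)) − φ_i(x)(X(x))·N(x)^i(Y(x)) ) for all vector fields X, Y and all x ∈ E. -/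

import Mathlib

set_option maxHeartbeats 1000000
set_option synthInstance.maxHeartbeats 400000


variable {E : Type*} [NormedAddCommGroup E] [NormedSpace ℝ E]

/-- Lie bracket of vector fields on `E`: `[X,Y](x) = DY(x)(X(x)) − DX(x)(Y(x))`. -/
noncomputable def lie (X Y : E → E) : E → E :=
  fun x => fderiv ℝ Y x (X x) - fderiv ℝ X x (Y x)

/-- Pointwise action of a (1,1) tensor field on a vector field. -/
def app (N : E → E →L[ℝ] E) (X : E → E) : E → E := fun x => N x (X x)

/-- Pointwise `k`-th power of a (1,1) tensor field. -/
def pw (N : E → E →L[ℝ] E) (k : ℕ) : E → E →L[ℝ] E := fun x => (N x) ^ k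

/-- Frölicher–Nijenhuis bracket of two (1,1) tensor fields, evaluated on vector fields. -/
noncomputable def fnBracket (N₁ N₂ : E → E →L[ℝ] E) (X Y : E → E) : E → E :=
  fun x =>
    N₁ x (N₂ x (lie X Y x)) + N₂ x (N₁ x (lie X Y x))
      + lie (app N₁ X) (app N₂ Y) x + lie (app N₂ X) (app N₁ Y) x
      - N₁ x (lie (app N₂ X) Y x + lie X (app N₂ Y) x)
      - N₂ x (lie (app N₁ X) Y x + lie X (app N₁ Y) x)

/-- Nijenhuis torsion of a (1,1) tensor field, evaluated on vector fields. -/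
noncomputable def tor (N : E → E →L[ℝ] E) (X Y : E → E) : E → E :=
  fun x =>
    lie (app N X) (app N Y) x
      + N x (N x (lie X Y x) - lie (app N X) Y x - lie X (app N Y) x)

/-- Haantjes tensor of a (1,1) tensor field, evaluated on vector fields. -/
noncomputable def haan (M : E → E →L[ℝ] E) (X Y : E → E) : E → E :=
  fun x =>
    M x (M x (tor M X Y x)) + tor M (app M X) (app M Y) x
      - M x (tor M (app M X) Y x + tor M X (app M Y) x)

/-- The bracket `[A,B]_X = [AX,BX] − A[X,BX] + B[X,AX]` of two (1,1) tensor fields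
with respect to a vector field `X`. -/
noncomputable def brX (A B : E → E →L[ℝ] E) (X : E → E) : E → E :=
  fun x =>
    lie (app A X) (app B X) x - A x (lie X (app B X) x) + B x (lie X (app A X) x)

/-- A 1-form is closed iff its Fréchet derivative is symmetric. -/
def IsClosedOneForm (ρ : E → E →L[ℝ] ℝ) : Prop :=
  ∀ x u v, fderiv ℝ ρ x u v = fderiv ℝ ρ x v u


/-- The pointwise derivative of the `i`-th power of a tensor field, as a bilinear expression. -/
noncomputable def Dpc (n : E →L[ℝ] E) (P : E →L[ℝ] E →L[ℝ] E) (i : ℕ) :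
    E →L[ℝ] E →L[ℝ] E :=
  ∑ r ∈ Finset.range i,
    ((ContinuousLinearMap.compL ℝ E E E).flip (n ^ (i - 1 - r))).comp
      ((ContinuousLinearMap.compL ℝ E E E (n ^ r)).comp P)

lemma Dpc_apply (n : E →L[ℝ] E) (P : E →L[ℝ] E →L[ℝ] E) (i : ℕ) (w z : E) :
    Dpc n P i w z = ∑ r ∈ Finset.range i, (n ^ r) (P w ((n ^ (i - 1 - r)) z)) := by
  simp [Dpc, ContinuousLinearMap.sum_apply, ContinuousLinearMap.comp_apply,
    ContinuousLinearMap.flip_apply, ContinuousLinearMap.compL_apply]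

section Core

variable (n : E →L[ℝ] E) (P : E →L[ℝ] E →L[ℝ] E)

lemma Z_symm (hH : ∀ u v : E, P (n u) v - P (n v) u + n (P v u) - n (P u v) = 0)
    (u v : E) : P (n u) v - n (P u v) = P (n v) u - n (P v u) := by
  have h := hH u v
  apply eq_of_sub_eq_zero
  calc P (n u) v - n (P u v) - (P (n v) u - n (P v u))
      = P (n u) v - P (n v) u + n (P v u) - n (P u v) := by abel
    _ = 0 := h

lemma F_expand (j : ℕ) (u v : E) :
    P ((n ^ j) u) v - (n ^ j) (P u v)
      = ∑ t ∈ Finset.range j,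
          (n ^ t) (P (n ((n ^ (j - 1 - t)) u)) v - n (P ((n ^ (j - 1 - t)) u) v)) := by
  induction j with
  | zero => simp
  | succ j ih =>
      rw [Finset.sum_range_succ']
      have hp : ∀ (m : ℕ) (w : E), (n ^ (m + 1)) w = n ((n ^ m) w) := by
        intro m w; rw [pow_succ']; rfl
      have hidx : ∀ t : ℕ, j + 1 - 1 - (t + 1) = j - 1 - t := by intro t; omega
      calc P ((n ^ (j + 1)) u) v - (n ^ (j + 1)) (P u v)
          = (P (n ((n ^ j) u)) v - n (P ((n ^ j) u) v))
            + n (P ((n ^ j) u) v - (n ^ j) (P u v)) := by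
            rw [hp, hp, map_sub]; abel
        _ = (P (n ((n ^ j) u)) v - n (P ((n ^ j) u) v))
            + ∑ t ∈ Finset.range j,
                n ((n ^ t) (P (n ((n ^ (j - 1 - t)) u)) v - n (P ((n ^ (j - 1 - t)) u) v))) := by
            rw [ih, map_sum]
        _ = (∑ t ∈ Finset.range j,
              (n ^ (t + 1)) (P (n ((n ^ (j + 1 - 1 - (t + 1))) u)) v
                - n (P ((n ^ (j + 1 - 1 - (t + 1))) u) v)))
            + (n ^ 0) (P (n ((n ^ (j + 1 - 1 - 0)) u)) v - n (P ((n ^ (j + 1 - 1 - 0)) u) v)) := by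
            rw [add_comm]
            congr 1
            · refine Finset.sum_congr rfl fun t _ => ?_
              rw [hidx]
              exact (hp t _).symm

lemma kappa_double (i j : ℕ) (u v : E) :
    Dpc n P i ((n ^ j) u) v - Dpc n P i ((n ^ j) v) u
      + (n ^ j) (Dpc n P i v u) - (n ^ j) (Dpc n P i u v)
      = ∑ r ∈ Finset.range i, ∑ t ∈ Finset.range j,
          (n ^ (r + t))
            ((P (n ((n ^ (j - 1 - t)) u)) ((n ^ (i - 1 - r)) v)
                - n (P ((n ^ (j - 1 - t)) u) ((n ^ (i - 1 - r)) v)))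
              - (P (n ((n ^ (j - 1 - t)) v)) ((n ^ (i - 1 - r)) u)
                - n (P ((n ^ (j - 1 - t)) v) ((n ^ (i - 1 - r)) u)))) := by
  rw [Dpc_apply, Dpc_apply, Dpc_apply, Dpc_apply, map_sum, map_sum,
    ← Finset.sum_sub_distrib, ← Finset.sum_add_distrib, ← Finset.sum_sub_distrib]
  refine Finset.sum_congr rfl fun r hr => ?_
  have hcomm : ∀ w : E, (n ^ j) ((n ^ r) w) = (n ^ r) ((n ^ j) w) := by
    intro w
    rw [← ContinuousLinearMap.mul_apply, ← ContinuousLinearMap.mul_apply, pow_mul_comm]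
  have hpa : ∀ (t : ℕ) (w : E), (n ^ r) ((n ^ t) w) = (n ^ (r + t)) w := by
    intro t w
    rw [pow_add, ContinuousLinearMap.mul_apply]
  rw [hcomm, hcomm, ← map_sub, ← map_add, ← map_sub]
  have hgroup :
      P ((n ^ j) u) ((n ^ (i - 1 - r)) v) - P ((n ^ j) v) ((n ^ (i - 1 - r)) u)
          + (n ^ j) (P v ((n ^ (i - 1 - r)) u)) - (n ^ j) (P u ((n ^ (i - 1 - r)) v))
        = (P ((n ^ j) u) ((n ^ (i - 1 - r)) v) - (n ^ j) (P u ((n ^ (i - 1 - r)) v)))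
          - (P ((n ^ j) v) ((n ^ (i - 1 - r)) u) - (n ^ j) (P v ((n ^ (i - 1 - r)) u))) := by
    abel
  rw [hgroup, F_expand n P j u ((n ^ (i - 1 - r)) v), F_expand n P j v ((n ^ (i - 1 - r)) u),
    ← Finset.sum_sub_distrib, map_sum]
  refine Finset.sum_congr rfl fun t ht => ?_
  rw [← map_sub, hpa]

lemma kappa_antisym (hH : ∀ u v : E, P (n u) v - P (n v) u + n (P v u) - n (P u v) = 0)
    (i j : ℕ) (u v : E) :
    Dpc n P i ((n ^ j) u) v - Dpc n P i ((n ^ j) v) u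
      + (n ^ j) (Dpc n P i v u) - (n ^ j) (Dpc n P i u v)
      = -(Dpc n P j ((n ^ i) u) v - Dpc n P j ((n ^ i) v) u
          + (n ^ i) (Dpc n P j v u) - (n ^ i) (Dpc n P j u v)) := by
  rw [kappa_double, kappa_double, Finset.sum_comm, ← Finset.sum_neg_distrib]
  refine Finset.sum_congr rfl fun r hr => ?_
  rw [← Finset.sum_neg_distrib]
  refine Finset.sum_congr rfl fun t ht => ?_
  rw [← map_neg, add_comm t r]
  congr 1
  have h1 := Z_symm n P hH ((n ^ (j - 1 - r)) u) ((n ^ (i - 1 - t)) v)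
  have h2 := Z_symm n P hH ((n ^ (j - 1 - r)) v) ((n ^ (i - 1 - t)) u)
  rw [h1, h2]
  abel

lemma core_sum (hH : ∀ u v : E, P (n u) v - P (n v) u + n (P v u) - n (P u v) = 0)
    (k : ℕ) (γ : ℕ → ℝ) (u v : E) :
    ∑ i ∈ Finset.range (k + 1), ∑ j ∈ Finset.range (k + 1),
      (γ i * γ j) •
        (Dpc n P i ((n ^ j) u) v - Dpc n P i ((n ^ j) v) u
          + (n ^ j) (Dpc n P i v u) - (n ^ j) (Dpc n P i u v)) = 0 := by
  set S := ∑ i ∈ Finset.range (k + 1), ∑ j ∈ Finset.range (k + 1),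
      (γ i * γ j) •
        (Dpc n P i ((n ^ j) u) v - Dpc n P i ((n ^ j) v) u
          + (n ^ j) (Dpc n P i v u) - (n ^ j) (Dpc n P i u v)) with hS
  have hswap : S = -S := by
    nth_rewrite 1 [hS, Finset.sum_comm]
    rw [hS, ← Finset.sum_neg_distrib]
    refine Finset.sum_congr rfl fun i hi => ?_
    rw [← Finset.sum_neg_distrib]
    refine Finset.sum_congr rfl fun j hj => ?_
    rw [kappa_antisym n P hH j i u v, mul_comm (γ j) (γ i), smul_neg]
  have h2 : (2 : ℝ) • S = 0 := by
    rw [two_smul]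
    nth_rewrite 1 [hswap]
    exact neg_add_cancel S
  have := smul_eq_zero.mp h2
  simpa using this.resolve_left (by norm_num)

/-- The 1-forms appearing in the torsion formula. -/
noncomputable def Phi (n : E →L[ℝ] E) (γ : ℕ → ℝ) (d : ℕ → E →L[ℝ] ℝ) (k r : ℕ) :
    E →L[ℝ] ℝ :=
  ∑ i ∈ Finset.range (k + 1), ∑ j ∈ Finset.range (k + 1),
    ((if i = r then (-(γ j)) • ((d i).comp (n ^ j)) else 0)
      + (if i + j = r then γ j • d i else 0))

lemma DMop_apply (k : ℕ) (γ : ℕ → ℝ) (d : ℕ → E →L[ℝ] ℝ) (w z : E) :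
    (∑ i ∈ Finset.range (k + 1), (γ i • Dpc n P i + (d i).smulRight (n ^ i))) w z
      = ∑ i ∈ Finset.range (k + 1), (γ i • Dpc n P i w z + d i w • (n ^ i) z) := by
  simp [ContinuousLinearMap.sum_apply, ContinuousLinearMap.add_apply,
    ContinuousLinearMap.smul_apply, ContinuousLinearMap.smulRight_apply]

lemma Mop_apply (k : ℕ) (γ : ℕ → ℝ) (w : E) :
    (∑ i ∈ Finset.range (k + 1), γ i • n ^ i) w
      = ∑ i ∈ Finset.range (k + 1), γ i • (n ^ i) w := by
  simp [ContinuousLinearMap.sum_apply, ContinuousLinearMap.smul_apply]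

lemma theta_L1 (k : ℕ) (γ : ℕ → ℝ) (d : ℕ → E →L[ℝ] ℝ) (u v : E) :
    (∑ i ∈ Finset.range (k + 1), (γ i • Dpc n P i + (d i).smulRight (n ^ i)))
        ((∑ i ∈ Finset.range (k + 1), γ i • n ^ i) u) v
      = ∑ i ∈ Finset.range (k + 1), ∑ j ∈ Finset.range (k + 1),
          ((γ i * γ j) • Dpc n P i ((n ^ j) u) v
            + (γ j * d i ((n ^ j) u)) • (n ^ i) v) := by
  rw [DMop_apply, Mop_apply]
  refine Finset.sum_congr rfl fun i hi => ?_
  rw [map_sum, map_sum, ContinuousLinearMap.sum_apply, Finset.smul_sum,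
    Finset.sum_smul, ← Finset.sum_add_distrib]
  refine Finset.sum_congr rfl fun j hj => ?_
  rw [map_smul, map_smul, ContinuousLinearMap.smul_apply, smul_smul, smul_eq_mul]

lemma theta_L3 (k : ℕ) (γ : ℕ → ℝ) (d : ℕ → E →L[ℝ] ℝ) (u v : E) :
    (∑ i ∈ Finset.range (k + 1), γ i • n ^ i)
        ((∑ i ∈ Finset.range (k + 1), (γ i • Dpc n P i + (d i).smulRight (n ^ i))) v u)
      = ∑ i ∈ Finset.range (k + 1), ∑ j ∈ Finset.range (k + 1),
          ((γ i * γ j) • (n ^ j) (Dpc n P i v u)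
            + (γ j * d i v) • (n ^ (i + j)) u) := by
  have hpow : ∀ (i j : ℕ) (w : E), (n ^ j) ((n ^ i) w) = (n ^ (i + j)) w := by
    intro i j w
    rw [add_comm, pow_add, ContinuousLinearMap.mul_apply]
  rw [Mop_apply, Finset.sum_comm]
  refine Finset.sum_congr rfl fun j hj => ?_
  rw [DMop_apply, map_sum, Finset.smul_sum]
  refine Finset.sum_congr rfl fun i hi => ?_
  rw [map_add, map_smul, map_smul, smul_add, smul_smul, smul_smul, mul_comm (γ j) (γ i),
    mul_comm (γ j) (d i v)]
  congr 2
  · exact hpow i j _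

lemma theta_rhs (k : ℕ) (γ : ℕ → ℝ) (d : ℕ → E →L[ℝ] ℝ) (u v : E) :
    ∑ r ∈ Finset.range (2 * k + 1),
        (Phi n γ d k r v • (n ^ r) u - Phi n γ d k r u • (n ^ r) v)
      = ∑ i ∈ Finset.range (k + 1), ∑ j ∈ Finset.range (k + 1),
          ((γ j * d i ((n ^ j) u)) • (n ^ i) v - (γ j * d i ((n ^ j) v)) • (n ^ i) u
            + (γ j * d i v) • (n ^ (i + j)) u - (γ j * d i u) • (n ^ (i + j)) v) := by
  have key : ∀ w w' : E,
      ∑ r ∈ Finset.range (2 * k + 1), Phi n γ d k r w • (n ^ r) w'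
        = ∑ i ∈ Finset.range (k + 1), ∑ j ∈ Finset.range (k + 1),
            ((-(γ j) * d i ((n ^ j) w)) • (n ^ i) w'
              + (γ j * d i w) • (n ^ (i + j)) w') := by
    intro w w'
    have expand : ∀ r, Phi n γ d k r w • (n ^ r) w'
        = ∑ i ∈ Finset.range (k + 1), ∑ j ∈ Finset.range (k + 1),
            ((if i = r then (-(γ j) * d i ((n ^ j) w)) • (n ^ r) w' else 0)
              + (if i + j = r then (γ j * d i w) • (n ^ r) w' else 0)) := by
      intro r
      rw [Phi, ContinuousLinearMap.sum_apply, Finset.sum_smul]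
      refine Finset.sum_congr rfl fun i _ => ?_
      rw [ContinuousLinearMap.sum_apply, Finset.sum_smul]
      refine Finset.sum_congr rfl fun j _ => ?_
      rw [ContinuousLinearMap.add_apply, add_smul]
      congr 1
      · rw [apply_ite (fun g : E →L[ℝ] ℝ => g w), ite_smul,
          ContinuousLinearMap.zero_apply, zero_smul]
        by_cases h : i = r <;> simp [h]
      · rw [apply_ite (fun g : E →L[ℝ] ℝ => g w), ite_smul,
          ContinuousLinearMap.zero_apply, zero_smul]
        by_cases h : i + j = r <;> simp [h]
    calc ∑ r ∈ Finset.range (2 * k + 1), Phi n γ d k r w • (n ^ r) w'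
        = ∑ r ∈ Finset.range (2 * k + 1), ∑ i ∈ Finset.range (k + 1),
            ∑ j ∈ Finset.range (k + 1),
            ((if i = r then (-(γ j) * d i ((n ^ j) w)) • (n ^ r) w' else 0)
              + (if i + j = r then (γ j * d i w) • (n ^ r) w' else 0)) :=
          Finset.sum_congr rfl fun r _ => expand r
      _ = ∑ i ∈ Finset.range (k + 1), ∑ r ∈ Finset.range (2 * k + 1),
            ∑ j ∈ Finset.range (k + 1), _ := Finset.sum_comm
      _ = ∑ i ∈ Finset.range (k + 1), ∑ j ∈ Finset.range (k + 1),
            ∑ r ∈ Finset.range (2 * k + 1),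
            ((if i = r then (-(γ j) * d i ((n ^ j) w)) • (n ^ r) w' else 0)
              + (if i + j = r then (γ j * d i w) • (n ^ r) w' else 0)) :=
          Finset.sum_congr rfl fun i _ => Finset.sum_comm
      _ = ∑ i ∈ Finset.range (k + 1), ∑ j ∈ Finset.range (k + 1),
            ((-(γ j) * d i ((n ^ j) w)) • (n ^ i) w'
              + (γ j * d i w) • (n ^ (i + j)) w') := by
          refine Finset.sum_congr rfl fun i hi => Finset.sum_congr rfl fun j hj => ?_
          have h1 := Finset.mem_range.mp hi
          have h2 := Finset.mem_range.mp hj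
          rw [Finset.sum_add_distrib, Finset.sum_ite_eq, Finset.sum_ite_eq,
            if_pos (Finset.mem_range.mpr (show i < 2 * k + 1 by omega)),
            if_pos (Finset.mem_range.mpr (show i + j < 2 * k + 1 by omega))]
  rw [Finset.sum_sub_distrib, key u v, key v u, ← Finset.sum_sub_distrib]
  refine Finset.sum_congr rfl fun i _ => ?_
  rw [← Finset.sum_sub_distrib]
  refine Finset.sum_congr rfl fun j _ => ?_
  rw [neg_mul, neg_smul, neg_mul, neg_smul]
  abel

lemma theta_main (hH : ∀ u v : E, P (n u) v - P (n v) u + n (P v u) - n (P u v) = 0)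
    (k : ℕ) (γ : ℕ → ℝ) (d : ℕ → E →L[ℝ] ℝ) (u v : E) :
    (∑ i ∈ Finset.range (k + 1), (γ i • Dpc n P i + (d i).smulRight (n ^ i)))
          ((∑ i ∈ Finset.range (k + 1), γ i • n ^ i) u) v
      - (∑ i ∈ Finset.range (k + 1), (γ i • Dpc n P i + (d i).smulRight (n ^ i)))
          ((∑ i ∈ Finset.range (k + 1), γ i • n ^ i) v) u
      + (∑ i ∈ Finset.range (k + 1), γ i • n ^ i)
          ((∑ i ∈ Finset.range (k + 1), (γ i • Dpc n P i + (d i).smulRight (n ^ i))) v u)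
      - (∑ i ∈ Finset.range (k + 1), γ i • n ^ i)
          ((∑ i ∈ Finset.range (k + 1), (γ i • Dpc n P i + (d i).smulRight (n ^ i))) u v)
      = ∑ r ∈ Finset.range (2 * k + 1),
          (Phi n γ d k r v • (n ^ r) u - Phi n γ d k r u • (n ^ r) v) := by
  rw [theta_L1 n P k γ d u v, theta_L1 n P k γ d v u, theta_L3 n P k γ d u v,
    theta_L3 n P k γ d v u, theta_rhs n k γ d u v,
    ← Finset.sum_sub_distrib, ← Finset.sum_add_distrib, ← Finset.sum_sub_distrib]
  refine Eq.trans (Finset.sum_congr rfl fun i _ => by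
    rw [← Finset.sum_sub_distrib, ← Finset.sum_add_distrib, ← Finset.sum_sub_distrib]) ?_
  have step : ∀ i j : ℕ,
      (γ i * γ j) • Dpc n P i ((n ^ j) u) v + (γ j * d i ((n ^ j) u)) • (n ^ i) v
        - ((γ i * γ j) • Dpc n P i ((n ^ j) v) u + (γ j * d i ((n ^ j) v)) • (n ^ i) u)
        + ((γ i * γ j) • (n ^ j) (Dpc n P i v u) + (γ j * d i v) • (n ^ (i + j)) u)
        - ((γ i * γ j) • (n ^ j) (Dpc n P i u v) + (γ j * d i u) • (n ^ (i + j)) v)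
      = (γ i * γ j) • (Dpc n P i ((n ^ j) u) v - Dpc n P i ((n ^ j) v) u
            + (n ^ j) (Dpc n P i v u) - (n ^ j) (Dpc n P i u v))
        + ((γ j * d i ((n ^ j) u)) • (n ^ i) v - (γ j * d i ((n ^ j) v)) • (n ^ i) u
            + (γ j * d i v) • (n ^ (i + j)) u - (γ j * d i u) • (n ^ (i + j)) v) := by
    intro i j
    rw [smul_sub, smul_add, smul_sub]
    abel
  calc (∑ i ∈ Finset.range (k + 1), ∑ j ∈ Finset.range (k + 1),
          ((γ i * γ j) • Dpc n P i ((n ^ j) u) v + (γ j * d i ((n ^ j) u)) • (n ^ i) v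
            - ((γ i * γ j) • Dpc n P i ((n ^ j) v) u + (γ j * d i ((n ^ j) v)) • (n ^ i) u)
            + ((γ i * γ j) • (n ^ j) (Dpc n P i v u) + (γ j * d i v) • (n ^ (i + j)) u)
            - ((γ i * γ j) • (n ^ j) (Dpc n P i u v) + (γ j * d i u) • (n ^ (i + j)) v)))
      = ∑ i ∈ Finset.range (k + 1), ∑ j ∈ Finset.range (k + 1),
          ((γ i * γ j) • (Dpc n P i ((n ^ j) u) v - Dpc n P i ((n ^ j) v) u
              + (n ^ j) (Dpc n P i v u) - (n ^ j) (Dpc n P i u v))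
            + ((γ j * d i ((n ^ j) u)) • (n ^ i) v - (γ j * d i ((n ^ j) v)) • (n ^ i) u
              + (γ j * d i v) • (n ^ (i + j)) u - (γ j * d i u) • (n ^ (i + j)) v)) := by
        refine Finset.sum_congr rfl fun i _ => Finset.sum_congr rfl fun j _ => step i j
    _ = (∑ i ∈ Finset.range (k + 1), ∑ j ∈ Finset.range (k + 1),
          (γ i * γ j) • (Dpc n P i ((n ^ j) u) v - Dpc n P i ((n ^ j) v) u
              + (n ^ j) (Dpc n P i v u) - (n ^ j) (Dpc n P i u v)))
        + ∑ i ∈ Finset.range (k + 1), ∑ j ∈ Finset.range (k + 1),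
            ((γ j * d i ((n ^ j) u)) • (n ^ i) v - (γ j * d i ((n ^ j) v)) • (n ^ i) u
              + (γ j * d i v) • (n ^ (i + j)) u - (γ j * d i u) • (n ^ (i + j)) v) := by
        rw [← Finset.sum_add_distrib]
        exact Finset.sum_congr rfl fun i _ => Finset.sum_add_distrib
    _ = ∑ i ∈ Finset.range (k + 1), ∑ j ∈ Finset.range (k + 1),
            ((γ j * d i ((n ^ j) u)) • (n ^ i) v - (γ j * d i ((n ^ j) v)) • (n ^ i) u
              + (γ j * d i v) • (n ^ (i + j)) u - (γ j * d i u) • (n ^ (i + j)) v) := by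
        rw [core_sum n P hH k γ u v, zero_add]

end Core

lemma one_le_top' : (1 : WithTop ℕ∞) ≤ ((⊤ : ℕ∞) : WithTop ℕ∞) := by
  exact_mod_cast le_top

lemma top_add_one_le' : ((⊤ : ℕ∞) : WithTop ℕ∞) + 1 ≤ ((⊤ : ℕ∞) : WithTop ℕ∞) := by
  exact_mod_cast le_top

lemma app_def (M : E → E →L[ℝ] E) (X : E → E) : app M X = fun y => M y (X y) := rfl

lemma contDiff_powN (N : E → E →L[ℝ] E) (hN : ContDiff ℝ (⊤ : ℕ∞) N) (j : ℕ) :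
    ContDiff ℝ (⊤ : ℕ∞) (fun x => (N x) ^ j) := by
  induction j with
  | zero => simp only [pow_zero]; exact contDiff_const
  | succ j ih => simp only [pow_succ]; exact ih.mul hN

lemma hasFDerivAt_powN (N : E → E →L[ℝ] E) (x : E) (hd : DifferentiableAt ℝ N x) (j : ℕ) :
    HasFDerivAt (fun y => (N y) ^ j) (Dpc (N x) (fderiv ℝ N x) j) x := by
  induction j with
  | zero =>
      have h0 : Dpc (N x) (fderiv ℝ N x) 0 = 0 := by simp [Dpc]
      rw [h0]
      simp only [pow_zero]
      exact hasFDerivAt_const 1 x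
  | succ j ih =>
      have h := ih.mul' hd.hasFDerivAt
      have heq : (N x) ^ j • fderiv ℝ N x
            + (Dpc (N x) (fderiv ℝ N x) j).smulRight (N x)
          = Dpc (N x) (fderiv ℝ N x) (j + 1) := by
        apply ContinuousLinearMap.ext; intro w
        apply ContinuousLinearMap.ext; intro z
        simp only [ContinuousLinearMap.add_apply, ContinuousLinearMap.smul_apply,
          smul_eq_mul, ContinuousLinearMap.mul_apply, ContinuousLinearMap.smulRight_apply]
        rw [Dpc_apply (i := j + 1), Dpc_apply, Finset.sum_range_succ]
        have hlast : j + 1 - 1 - j = 0 := by omega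
        rw [hlast, pow_zero, ContinuousLinearMap.one_apply]
        rw [add_comm]
        congr 1
        refine Finset.sum_congr rfl fun r hr => ?_
        have hr' := Finset.mem_range.mp hr
        congr 2
        rw [← ContinuousLinearMap.mul_apply, ← pow_succ]
        congr 2
        omega
      rw [← heq]
      simp only [pow_succ]
      exact h

lemma tor_formula (M : E → E →L[ℝ] E) (x : E) (hM : DifferentiableAt ℝ M x)
    (X Y : E → E) (hX : DifferentiableAt ℝ X x) (hY : DifferentiableAt ℝ Y x) :
    tor M X Y x
      = fderiv ℝ M x (M x (X x)) (Y x) - fderiv ℝ M x (M x (Y x)) (X x)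
        + M x (fderiv ℝ M x (Y x) (X x)) - M x (fderiv ℝ M x (X x) (Y x)) := by
  have eX : fderiv ℝ (fun y => M y (X y)) x
      = (M x).comp (fderiv ℝ X x) + (fderiv ℝ M x).flip (X x) := fderiv_clm_apply hM hX
  have eY : fderiv ℝ (fun y => M y (Y y)) x
      = (M x).comp (fderiv ℝ Y x) + (fderiv ℝ M x).flip (Y x) := fderiv_clm_apply hM hY
  simp only [tor, lie, app_def]
  rw [eX, eY]
  simp only [ContinuousLinearMap.add_apply, ContinuousLinearMap.comp_apply,
    ContinuousLinearMap.flip_apply, map_sub, map_add]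
  abel

lemma pointH (N : E → E →L[ℝ] E) (hN : ContDiff ℝ (⊤ : ℕ∞) N)
    (hT : ∀ X Y : E → E, ContDiff ℝ (⊤ : ℕ∞) X → ContDiff ℝ (⊤ : ℕ∞) Y →
      ∀ x, tor N X Y x = 0)
    (x : E) (u v : E) :
    fderiv ℝ N x (N x u) v - fderiv ℝ N x (N x v) u
      + N x (fderiv ℝ N x v u) - N x (fderiv ℝ N x u v) = 0 := by
  have h := hT (fun _ => u) (fun _ => v) contDiff_const contDiff_const x
  rw [tor_formula N x ((hN.differentiable (by simp)) x) _ _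
    (differentiableAt_const u) (differentiableAt_const v)] at h
  simpa using h

/-- Coefficient functions of the polynomial tensor field. -/
def cf (a : ℕ → E → ℝ) (k i : ℕ) : E → ℝ := fun x => if i = k then 1 else -(a (k - 1 - i) x)

lemma cf_contDiff (a : ℕ → E → ℝ) (k : ℕ) (ha : ∀ i < k, ContDiff ℝ (⊤ : ℕ∞) (a i))
    (hk : 1 ≤ k) (i : ℕ) : ContDiff ℝ (⊤ : ℕ∞) (cf a k i) := by
  by_cases h : i = k
  · have e : cf a k i = fun _ => (1 : ℝ) := funext fun x => if_pos h
    rw [e]; exact contDiff_const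
  · have e : cf a k i = fun x => -(a (k - 1 - i) x) := funext fun x => if_neg h
    rw [e]; exact (ha (k - 1 - i) (by omega)).neg

lemma M_eq (N : E → E →L[ℝ] E) (a : ℕ → E → ℝ) (k : ℕ) :
    (fun p => (N p) ^ k - ∑ i ∈ Finset.range k, a (k - 1 - i) p • (N p) ^ i)
      = fun p => ∑ i ∈ Finset.range (k + 1), cf a k i p • (N p) ^ i := by
  funext p
  rw [Finset.sum_range_succ]
  have h1 : cf a k k p = 1 := by simp [cf]
  have h2 : ∀ i ∈ Finset.range k, cf a k i p • (N p) ^ i = -(a (k - 1 - i) p • (N p) ^ i) := by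
    intro i hi
    have hik : i ≠ k := by have := Finset.mem_range.mp hi; omega
    simp [cf, hik, neg_smul]
  rw [h1, one_smul, Finset.sum_congr rfl h2, Finset.sum_neg_distrib]
  abel

lemma hasFDerivAt_M (N : E → E →L[ℝ] E) (hN : ContDiff ℝ (⊤ : ℕ∞) N)
    (a : ℕ → E → ℝ) (k : ℕ) (ha : ∀ i < k, ContDiff ℝ (⊤ : ℕ∞) (a i)) (hk : 1 ≤ k) (x : E) :
    HasFDerivAt (fun p => ∑ i ∈ Finset.range (k + 1), cf a k i p • (N p) ^ i)
      (∑ i ∈ Finset.range (k + 1),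
        (cf a k i x • Dpc (N x) (fderiv ℝ N x) i
          + (fderiv ℝ (cf a k i) x).smulRight ((N x) ^ i))) x := by
  apply HasFDerivAt.fun_sum
  intro i _
  exact (((cf_contDiff a k ha hk i).differentiable (by simp)) x).hasFDerivAt.smul
    (hasFDerivAt_powN N x ((hN.differentiable (by simp)) x) i)

theorem stmt16 (N : E → E →L[ℝ] E) (hN : ContDiff ℝ (⊤ : ℕ∞) N)
    (hT : ∀ X Y : E → E, ContDiff ℝ (⊤ : ℕ∞) X → ContDiff ℝ (⊤ : ℕ∞) Y →
      ∀ x, tor N X Y x = 0)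
    (k : ℕ) (hk : 1 ≤ k)
    (a : ℕ → E → ℝ) (ha : ∀ i < k, ContDiff ℝ (⊤ : ℕ∞) (a i)) :
    ∃ (m : ℕ) (φ : ℕ → E → E →L[ℝ] ℝ),
      (∀ i ≤ m, ContDiff ℝ (⊤ : ℕ∞) (φ i)) ∧
      ∀ X Y : E → E, ContDiff ℝ (⊤ : ℕ∞) X → ContDiff ℝ (⊤ : ℕ∞) Y → ∀ x,
        tor (fun p => (N p) ^ k - ∑ i ∈ Finset.range k, a (k - 1 - i) p • (N p) ^ i) X Y x
          = ∑ i ∈ Finset.range (m + 1),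
              (φ i x (Y x) • ((N x) ^ i) (X x) - φ i x (X x) • ((N x) ^ i) (Y x)) := by
  classical
  refine ⟨2 * k,
    fun r x => Phi (N x) (fun i => cf a k i x) (fun i => fderiv ℝ (cf a k i) x) k r, ?_, ?_⟩
  · intro r _
    apply ContDiff.sum
    intro i _
    apply ContDiff.sum
    intro j _
    apply ContDiff.add
    · by_cases h : i = r
      · simp only [if_pos h]
        exact ContDiff.smul ((cf_contDiff a k ha hk j).neg)
          (ContDiff.clm_comp ((cf_contDiff a k ha hk i).fderiv_right top_add_one_le')
            (contDiff_powN N hN j))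
      · simp only [if_neg h]; exact contDiff_const
    · by_cases h : i + j = r
      · simp only [if_pos h]
        exact ContDiff.smul (cf_contDiff a k ha hk j)
          ((cf_contDiff a k ha hk i).fderiv_right top_add_one_le')
      · simp only [if_neg h]; exact contDiff_const
  · intro X Y hX hY x
    rw [M_eq N a k]
    have hM := hasFDerivAt_M N hN a k ha hk x
    rw [tor_formula _ x hM.differentiableAt X Y
      ((hX.differentiable (by simp)) x) ((hY.differentiable (by simp)) x), hM.fderiv]
    exact theta_main (N x) (fderiv ℝ N x) (pointH N hN hT x) k
      (fun i => cf a k i x) (fun i => fderiv ℝ (cf a k i) x) (X x) (Y x)
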